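/- arXiv:2403.03085 — 6 statements merged into one kernel-verified Lean document; each statement's English description precedes it below -/
import Mathlib

section
/- Let (F,G,ζ) be a left loose morphism of adjunctions from (L,R,η,ε) to (L',R',η',ε'). Setting θ := (L'ζ♯) ∘ (ζ⁻¹R) : FLR ⇒ L'R'F, the pair (F,θ) is a lax morphism of comonads from the comonad (LR, ε, LηR) to the comonad (L'R', ε', L'η'R'), i.e. θ is compatible with both counits and comultiplications. -/
open CategoryTheory

variable {C D C' D' : Type*} [Category C] [Category D] [Category C'] [Category D']

/-- The component at `X : C` of the mate `ζ♯ = (R'Fε)(R'ζR)(η'GR) : GR ⇒ R'F` of a natural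
isomorphism `ζ : L'G ≅ FL` for a left loose morphism of adjunctions `(F, G, ζ)`. -/
def mateApp {L : D ⥤ C} {R : C ⥤ D} (adj : L ⊣ R)
    {L' : D' ⥤ C'} {R' : C' ⥤ D'} (adj' : L' ⊣ R')
    {F : C ⥤ C'} {G : D ⥤ D'} (ζ : G ⋙ L' ≅ L ⋙ F) (X : C) :
    G.obj (R.obj X) ⟶ R'.obj (F.obj X) :=
  adj'.unit.app (G.obj (R.obj X)) ≫ R'.map (ζ.hom.app (R.obj X)) ≫
    R'.map (F.map (adj.counit.app X))

/-- The component at `E : C` of `θ := (L'ζ♯) ∘ (ζ⁻¹R) : FLR ⇒ L'R'F`. -/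
def thetaApp {L : D ⥤ C} {R : C ⥤ D} (adj : L ⊣ R)
    {L' : D' ⥤ C'} {R' : C' ⥤ D'} (adj' : L' ⊣ R')
    {F : C ⥤ C'} {G : D ⥤ D'} (ζ : G ⋙ L' ≅ L ⋙ F) (E : C) :
    F.obj (L.obj (R.obj E)) ⟶ L'.obj (R'.obj (F.obj E)) :=
  ζ.inv.app (R.obj E) ≫ L'.map (mateApp adj adj' ζ E)

theorem mateApp_natural {L : D ⥤ C} {R : C ⥤ D} (adj : L ⊣ R)
    {L' : D' ⥤ C'} {R' : C' ⥤ D'} (adj' : L' ⊣ R')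
    {F : C ⥤ C'} {G : D ⥤ D'} (ζ : G ⋙ L' ≅ L ⋙ F) {E E' : C} (f : E ⟶ E') :
    G.map (R.map f) ≫ mateApp adj adj' ζ E' =
      mateApp adj adj' ζ E ≫ R'.map (F.map f) := by
  simp only [mateApp]
  rw [← Category.assoc, show G.map (R.map f) ≫ adj'.unit.app _ =
    adj'.unit.app _ ≫ R'.map (L'.map (G.map (R.map f))) from by
      simpa using adj'.unit.naturality (G.map (R.map f))]
  simp only [Functor.comp_map, Category.assoc]
  have h := ζ.hom.naturality (R.map f)
  simp only [Functor.comp_map] at h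
  rw [← Functor.map_comp_assoc, h, Functor.map_comp_assoc]
  simp only [← Functor.map_comp, Category.assoc,
    show L.map (R.map f) ≫ adj.counit.app E' = adj.counit.app E ≫ f from adj.counit.naturality f]

theorem mateApp_comul {L : D ⥤ C} {R : C ⥤ D} (adj : L ⊣ R)
    {L' : D' ⥤ C'} {R' : C' ⥤ D'} (adj' : L' ⊣ R')
    {F : C ⥤ C'} {G : D ⥤ D'} (ζ : G ⋙ L' ≅ L ⋙ F) (E : C) :
    mateApp adj adj' ζ E ≫ adj'.unit.app (R'.obj (F.obj E)) =
      G.map (adj.unit.app (R.obj E)) ≫ mateApp adj adj' ζ (L.obj (R.obj E)) ≫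
        R'.map (thetaApp adj adj' ζ E) := by
  have key : L'.map (G.map (adj.unit.app (R.obj E))) ≫ ζ.hom.app (R.obj (L.obj (R.obj E))) ≫
      F.map (adj.counit.app (L.obj (R.obj E))) ≫ ζ.inv.app (R.obj E) ≫
        L'.map (mateApp adj adj' ζ E) = L'.map (mateApp adj adj' ζ E) := by
    have h2 := ζ.hom.naturality (adj.unit.app (R.obj E))
    simp only [Functor.comp_map, Functor.comp_obj, Functor.id_obj, Functor.id_map] at h2
    rw [← Category.assoc, h2, Category.assoc, ← Category.assoc (F.map _), ← Functor.map_comp,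
      adj.left_triangle_components]
    simp
  have hm := adj'.unit.naturality (mateApp adj adj' ζ E)
  simp only [Functor.comp_map, Functor.comp_obj, Functor.id_obj, Functor.id_map] at hm
  rw [hm]
  conv_rhs => rw [mateApp, thetaApp]
  have hu := reassoc_of% adj'.unit.naturality (G.map (adj.unit.app (R.obj E)))
  simp only [Category.assoc]
  rw [hu]
  simp only [← Functor.map_comp, Category.assoc]
  rw [key]

/-- for a left loose morphism of adjunctions `(F, G, ζ)`, the pair `(F, θ)` with
`θ := (L'ζ♯) ∘ (ζ⁻¹R)` is a lax morphism of comonads from `(LR, ε, LηR)` to `(L'R', ε', L'η'R')`: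
`θ` is natural, compatible with the counits, and compatible with the comultiplications. -/
theorem theta_lax_morphism_of_comonads
    {L : D ⥤ C} {R : C ⥤ D} (adj : L ⊣ R)
    {L' : D' ⥤ C'} {R' : C' ⥤ D'} (adj' : L' ⊣ R')
    {F : C ⥤ C'} {G : D ⥤ D'} (ζ : G ⋙ L' ≅ L ⋙ F) :
    (∀ {E E' : C} (f : E ⟶ E'),
        F.map (L.map (R.map f)) ≫ thetaApp adj adj' ζ E' =
          thetaApp adj adj' ζ E ≫ L'.map (R'.map (F.map f))) ∧
    (∀ E : C,
        thetaApp adj adj' ζ E ≫ adj'.counit.app (F.obj E) = F.map (adj.counit.app E)) ∧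
    (∀ E : C,
        thetaApp adj adj' ζ E ≫ L'.map (adj'.unit.app (R'.obj (F.obj E))) =
          F.map (L.map (adj.unit.app (R.obj E))) ≫
            thetaApp adj adj' ζ (L.obj (R.obj E)) ≫
              L'.map (R'.map (thetaApp adj adj' ζ E))) := by
  refine ⟨fun {E E'} f => ?_, fun E => ?_, fun E => ?_⟩
  · simp only [thetaApp]
    have h := ζ.inv.naturality (R.map f)
    simp only [Functor.comp_map] at h
    rw [← Category.assoc, h, Category.assoc, ← Functor.map_comp, mateApp_natural]
    simp
  · simp [thetaApp, mateApp]
  · conv_lhs => rw [thetaApp, Category.assoc, ← Functor.map_comp, mateApp_comul adj adj' ζ E]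
    conv_rhs => rw [thetaApp]
    have h := reassoc_of% ζ.inv.naturality (adj.unit.app (R.obj E))
    simp only [Functor.map_comp, Category.assoc]
    rw [h]
end

section
/- Let (F₁,G₁,ζ₁) and (F₂,G₂,ζ₂) be left loose morphisms of adjunctions from (L,R) to (L',R'), and let φ : F₁ ⇒ F₂ and ψ : G₁ ⇒ G₂ be natural transformations. Then (φL) ∘ ζ₁ = ζ₂ ∘ (L'ψ) holds if and only if (R'φ) ∘ ζ₁♯ = ζ₂♯ ∘ (ψR) holds. -/
open CategoryTheory

variable {C D C' D' : Type*} [Category C] [Category D] [Category C'] [Category D']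

lemma mateApp_eq_mateEquiv {L : D ⥤ C} {R : C ⥤ D} (adj : L ⊣ R)
    {L' : D' ⥤ C'} {R' : C' ⥤ D'} (adj' : L' ⊣ R')
    {F : C ⥤ C'} {G : D ⥤ D'} (ζ : G ⋙ L' ≅ L ⋙ F) (X : C) :
    mateApp adj adj' ζ X = (mateEquiv adj adj' ζ.hom).app X := by
  simp [mateApp, mateEquiv]

/-- for left loose morphisms of adjunctions `(F₁, G₁, ζ₁)` and `(F₂, G₂, ζ₂)` and
natural transformations `φ : F₁ ⇒ F₂`, `ψ : G₁ ⇒ G₂`, the square `(φL) ∘ ζ₁ = ζ₂ ∘ (L'ψ)`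
commutes if and only if the mate square `(R'φ) ∘ ζ₁♯ = ζ₂♯ ∘ (ψR)` commutes. -/
theorem two_cell_square_iff_mate_square
    {L : D ⥤ C} {R : C ⥤ D} (adj : L ⊣ R)
    {L' : D' ⥤ C'} {R' : C' ⥤ D'} (adj' : L' ⊣ R')
    {F₁ F₂ : C ⥤ C'} {G₁ G₂ : D ⥤ D'}
    (ζ₁ : G₁ ⋙ L' ≅ L ⋙ F₁) (ζ₂ : G₂ ⋙ L' ≅ L ⋙ F₂)
    (φ : F₁ ⟶ F₂) (ψ : G₁ ⟶ G₂) :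
    (∀ X : D, ζ₁.hom.app X ≫ φ.app (L.obj X) = L'.map (ψ.app X) ≫ ζ₂.hom.app X) ↔
    (∀ Y : C, mateApp adj adj' ζ₁ Y ≫ R'.map (φ.app Y) =
        ψ.app (R.obj Y) ≫ mateApp adj adj' ζ₂ Y) := by
  have key1 : ∀ Y : C,
      (mateEquiv adj adj' (ζ₁.hom ≫ Functor.whiskerLeft L φ)).app Y =
        mateApp adj adj' ζ₁ Y ≫ R'.map (φ.app Y) := by
    intro Y
    simp only [mateApp, mateEquiv, Equiv.coe_fn_mk, NatTrans.comp_app,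
      Functor.whiskerLeft_app, Functor.whiskerRight_app,
      Functor.comp_obj, Functor.comp_map, Functor.id_obj, Functor.map_comp, Category.assoc,
      Functor.rightUnitor_inv_app, Functor.leftUnitor_hom_app, Functor.associator_hom_app,
      Functor.associator_inv_app, Functor.map_id, Category.id_comp, Category.comp_id]
    rw [← R'.map_comp (φ.app (L.obj (R.obj Y))), ← NatTrans.naturality, R'.map_comp]
  have key2 : ∀ Y : C,
      (mateEquiv adj adj' (Functor.whiskerRight ψ L' ≫ ζ₂.hom)).app Y =
        ψ.app (R.obj Y) ≫ mateApp adj adj' ζ₂ Y := by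
    intro Y
    simp only [mateApp, mateEquiv, Equiv.coe_fn_mk, NatTrans.comp_app,
      Functor.whiskerLeft_app, Functor.whiskerRight_app,
      Functor.comp_obj, Functor.comp_map, Functor.id_obj, Functor.map_comp, Category.assoc,
      Functor.rightUnitor_inv_app, Functor.leftUnitor_hom_app, Functor.associator_hom_app,
      Functor.associator_inv_app, Functor.map_id, Category.id_comp, Category.comp_id]
    rw [← adj'.unit_naturality_assoc]
  constructor
  · intro h Y
    rw [← key1, ← key2]
    have : ζ₁.hom ≫ Functor.whiskerLeft L φ =
        Functor.whiskerRight ψ L' ≫ ζ₂.hom := by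
      ext Z
      simpa using h Z
    rw [this]
  · intro h X
    have : mateEquiv adj adj' (ζ₁.hom ≫ Functor.whiskerLeft L φ) =
        mateEquiv adj adj' (Functor.whiskerRight ψ L' ≫ ζ₂.hom) := by
      ext Y
      rw [key1, key2, h Y]
    have := (mateEquiv adj adj' (G := G₁) (H := F₂)).injective this
    have := congrArg (fun t => t.app X) this
    simpa using this
end

section
/- In a generalised category with families (u, u̇, Σ ⊣ Δ), every component of the unit η of the adjunction Σ ⊣ Δ is a monomorphism. -/
open CategoryTheory

/-- An arrow `f : X ⟶ Y` in `E` is `p`-cartesian if every `g : Z ⟶ Y` whose image factors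
through `p f` lifts uniquely. -/
def IsCartesian {E B : Type*} [Category E] [Category B] (p : E ⥤ B)
    {X Y : E} (f : X ⟶ Y) : Prop :=
  ∀ ⦃Z : E⦄ (g : Z ⟶ Y) (h : p.obj Z ⟶ p.obj X),
    h ≫ p.map f = p.map g → ∃! l : Z ⟶ X, p.map l = h ∧ l ≫ f = g

/-- A functor `p : E ⥤ B` is a (Grothendieck) fibration if every arrow into the image of an
object of `E` has a cartesian lift. -/
def IsFibration {E B : Type*} [Category E] [Category B] (p : E ⥤ B) : Prop :=
  ∀ (Y : E) (X : B) (φ : X ⟶ p.obj Y),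
    ∃ (Z : E) (f : Z ⟶ Y) (e : p.obj Z = X),
      IsCartesian p f ∧ p.map f = eqToHom e ≫ φ

/-- A generalised category with families: fibrations `u : U ⥤ B` and `ut : Ut ⥤ B`, a cartesian
functor `S` ("Σ") over `B` with a right adjoint `D` ("Δ"), such that the unit of the adjunction
is componentwise `ut`-cartesian and the counit is componentwise `u`-cartesian. -/
structure GCwF (B U Ut : Type*) [Category B] [Category U] [Category Ut] where
  u : U ⥤ B
  ut : Ut ⥤ B
  u_fib : IsFibration u
  ut_fib : IsFibration ut
  S : Ut ⥤ U
  D : U ⥤ Ut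
  over' : S ⋙ u = ut
  S_cart : ∀ {a b : Ut} (f : a ⟶ b), IsCartesian ut f → IsCartesian u (S.map f)
  adj : S ⊣ D
  unit_cart : ∀ a : Ut, IsCartesian ut (adj.unit.app a)
  counit_cart : ∀ A : U, IsCartesian u (adj.counit.app A)

/-- in a generalised category with families, every component of the unit of the
adjunction `Σ ⊣ Δ` is a monomorphism. -/
theorem gcwf_unit_mono {B U Ut : Type*} [Category B] [Category U] [Category Ut]
    (G : GCwF B U Ut) (a : Ut) : Mono (G.adj.unit.app a) := by
  -- First: ut.map (unit) is a (split) mono, via the triangle identity and G.over.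
  have hsplit : G.S.map (G.adj.unit.app a) ≫ G.adj.counit.app (G.S.obj a) = 𝟙 _ :=
    G.adj.left_triangle_components a
  have hmonoU : Mono (G.u.map (G.S.map (G.adj.unit.app a))) := by
    have : G.u.map (G.S.map (G.adj.unit.app a)) ≫ G.u.map (G.adj.counit.app (G.S.obj a))
        = 𝟙 _ := by
      rw [← G.u.map_comp, hsplit, G.u.map_id]
    refine ⟨fun g h hgh => ?_⟩
    calc g = g ≫ G.u.map (G.S.map (G.adj.unit.app a))
                ≫ G.u.map (G.adj.counit.app (G.S.obj a)) := by rw [this]; simp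
      _ = h ≫ G.u.map (G.S.map (G.adj.unit.app a))
                ≫ G.u.map (G.adj.counit.app (G.S.obj a)) := by
            rw [← Category.assoc, hgh, Category.assoc]
      _ = h := by rw [this]; simp
  have hover := Functor.congr_hom G.over' (G.adj.unit.app a)
  have hmono : Mono (G.ut.map (G.adj.unit.app a)) := by
    have : G.ut.map (G.adj.unit.app a)
        = eqToHom (by rw [← G.over']; rfl) ≫ G.u.map (G.S.map (G.adj.unit.app a))
          ≫ eqToHom (by rw [← G.over']; rfl) := by
      simp [Functor.comp_map] at hover
      rw [hover]; simp
    rw [this]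
    exact mono_comp _ _
  constructor
  intro Z x y hxy
  have hmaps : G.ut.map x = G.ut.map y := by
    have : G.ut.map x ≫ G.ut.map (G.adj.unit.app a)
        = G.ut.map y ≫ G.ut.map (G.adj.unit.app a) := by
      rw [← G.ut.map_comp, ← G.ut.map_comp, hxy]
    exact hmono.right_cancellation _ _ this
  obtain ⟨l, hl, hu⟩ := G.unit_cart a (y ≫ G.adj.unit.app a) (G.ut.map y)
    (by rw [← G.ut.map_comp])
  have hx := hu x ⟨by rw [hmaps], hxy⟩
  have hy := hu y ⟨rfl, rfl⟩
  rw [hx, hy]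
end

section
/- For a weakening and contraction comonad (K,ε,ν) on a fibration p : E → B: (i) the functor K preserves p-cartesian arrows, and (ii) the structure map of any K-coalgebra is p-cartesian. -/
open CategoryTheory

/-- The identity arrow is cartesian. -/
lemma isCartesian_id {E B : Type*} [Category E] [Category B] (p : E ⥤ B) (X : E) :
    IsCartesian p (𝟙 X) := by
  intro Z g h hh
  simp only [p.map_id, Category.comp_id] at hh
  exact ⟨g, ⟨hh.symm, Category.comp_id g⟩, fun l hl => by
    simpa using hl.2⟩

/-- If `f ≫ g` is cartesian and `g` is cartesian, then `f` is cartesian. -/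
lemma isCartesian_of_comp {E B : Type*} [Category E] [Category B] (p : E ⥤ B)
    {X Y Z : E} {f : X ⟶ Y} {g : Y ⟶ Z}
    (hfg : IsCartesian p (f ≫ g)) (hg : IsCartesian p g) : IsCartesian p f := by
  intro W t h hh
  have h2 : h ≫ p.map (f ≫ g) = p.map (t ≫ g) := by
    simp only [p.map_comp, ← Category.assoc, hh]
  obtain ⟨l, ⟨hl1, hl2⟩, hlu⟩ := hfg (t ≫ g) h h2
  have hlf : l ≫ f = t := by
    have h3 : p.map t ≫ p.map g = p.map (t ≫ g) := (p.map_comp t g).symm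
    obtain ⟨m, _, hmu⟩ := hg (t ≫ g) (p.map t) h3
    have e1 : l ≫ f = m := hmu (l ≫ f) ⟨by rw [p.map_comp, hl1, hh], by
      rw [Category.assoc, ← hl2]⟩
    have e2 : t = m := hmu t ⟨rfl, rfl⟩
    rw [e1, ← e2]
  refine ⟨l, ⟨hl1, hlf⟩, fun l' hl' => hlu l' ⟨hl'.1, by
    rw [← Category.assoc, hl'.2]⟩⟩

/-- for a weakening and contraction comonad `(K, ε, ν)` on a fibration `p`:
(i) `K` preserves `p`-cartesian arrows, and (ii) the structure map of any `K`-coalgebra is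
`p`-cartesian. -/
theorem wccmd_preserves_cartesian_and_coalgebras_cartesian
    {E B : Type*} [Category E] [Category B] (p : E ⥤ B) (hp : IsFibration p)
    (K : Comonad E)
    (hε : ∀ A : E, IsCartesian p (K.ε.app A))
    (hpb : ∀ {A A' : E} (f : A ⟶ A'), IsCartesian p f →
      IsPullback (p.map (K.ε.app A)) (p.map ((K : E ⥤ E).map f)) (p.map f)
        (p.map (K.ε.app A'))) :
    (∀ {A A' : E} (f : A ⟶ A'), IsCartesian p f → IsCartesian p ((K : E ⥤ E).map f)) ∧
    (∀ X : K.Coalgebra, IsCartesian p X.a) := by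
  constructor
  · intro A A' f hf
    intro Z g h hh
    -- naturality: K.map f ≫ ε A' = ε A ≫ f
    have hnat : (K : E ⥤ E).map f ≫ K.ε.app A' = K.ε.app A ≫ f := K.ε.naturality f
    -- lift g ≫ ε A' along f
    have hc0 : (h ≫ p.map (K.ε.app A)) ≫ p.map f = p.map (g ≫ K.ε.app A') := by
      rw [Category.assoc, ← p.map_comp, ← hnat, p.map_comp, ← Category.assoc, hh,
        ← p.map_comp]
    obtain ⟨l₀, ⟨hl₀1, hl₀2⟩, hl₀u⟩ := hf (g ≫ K.ε.app A') (h ≫ p.map (K.ε.app A)) hc0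
    -- lift l₀ along ε A
    obtain ⟨l, ⟨hl1, hl2⟩, hlu⟩ := hε A l₀ h hl₀1.symm
    have hkey : l ≫ (K : E ⥤ E).map f = g := by
      -- both are lifts of g ≫ ε A' along ε A' with projection p.map g
      obtain ⟨m, _, hmu⟩ := hε A' (g ≫ K.ε.app A') (p.map g) (p.map_comp g _).symm
      have e1 : l ≫ (K : E ⥤ E).map f = m := hmu (l ≫ (K : E ⥤ E).map f)
        ⟨by rw [p.map_comp, hl1, hh],
        by rw [Category.assoc, hnat, ← Category.assoc, hl2, hl₀2]⟩
      have e2 : g = m := hmu g ⟨rfl, rfl⟩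
      rw [e1, ← e2]
    refine ⟨l, ⟨hl1, hkey⟩, fun l' hl' => ?_⟩
    -- uniqueness
    have hlf : l' ≫ K.ε.app A = l₀ := by
      refine hl₀u _ ⟨by rw [p.map_comp, hl'.1], ?_⟩
      rw [Category.assoc, ← hnat, ← Category.assoc, hl'.2]
    exact hlu l' ⟨hl'.1, hlf⟩
  · intro X
    exact isCartesian_of_comp p (f := X.a) (g := K.ε.app X.A)
      (by rw [X.counit]; exact isCartesian_id p X.A) (hε X.A)
end

section
/- Let (K,ε,ν) be a weakening and contraction comonad on a fibration p : E → B. Then the composite p ∘ U^K : Coalg(K) → B is a fibration, where U^K is the forgetful functor from the category of K-coalgebras. -/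
open CategoryTheory

/-- for a weakening and contraction comonad `(K, ε, ν)` on a fibration
`p : E ⥤ B`, the composite `p ∘ U^K : Coalg(K) ⥤ B` of `p` with the forgetful functor from the
Eilenberg–Moore category of coalgebras is a fibration. -/
theorem wccmd_coalgebras_fibration
    {E B : Type*} [Category E] [Category B] (p : E ⥤ B) (hp : IsFibration p)
    (K : Comonad E)
    (hε : ∀ A : E, IsCartesian p (K.ε.app A))
    (hpb : ∀ {A A' : E} (f : A ⟶ A'), IsCartesian p f →
      IsPullback (p.map (K.ε.app A)) (p.map ((K : E ⥤ E).map f)) (p.map f)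
        (p.map (K.ε.app A'))) :
    IsFibration (K.forget ⋙ p) := by
  intro Y X φ
  obtain ⟨Z, f, e, hf, hfe⟩ := hp Y.A X φ
  -- the pullback square in B coming from the cartesian arrow f
  have hsq := hpb f hf
  have hu : (𝟙 (p.obj Z)) ≫ p.map f = p.map (f ≫ Y.a) ≫ p.map (K.ε.app Y.A) := by
    rw [Category.id_comp, ← p.map_comp, Category.assoc, Y.counit, Category.comp_id]
  set h0 : p.obj Z ⟶ p.obj ((K : E ⥤ E).obj Z) :=
    hsq.lift (𝟙 _) (p.map (f ≫ Y.a)) hu with h0_def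
  have h0_fst : h0 ≫ p.map (K.ε.app Z) = 𝟙 _ := hsq.lift_fst _ _ _
  have h0_snd : h0 ≫ p.map ((K : E ⥤ E).map f) = p.map (f ≫ Y.a) := hsq.lift_snd _ _ _
  -- lift the structure map across the cartesian counit
  obtain ⟨a, ⟨ha_p, ha_c⟩, ha_u⟩ :=
    hε Z (𝟙 Z) h0 (by rw [h0_fst, p.map_id])
  -- f commutes with the structure maps
  have hf_hom : a ≫ (K : E ⥤ E).map f = f ≫ Y.a := by
    have hcond : p.map (f ≫ Y.a) ≫ p.map (K.ε.app Y.A) = p.map f := by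
      rw [← p.map_comp, Category.assoc, Y.counit, Category.comp_id]
    obtain ⟨m, hm, hmu⟩ := hε Y.A f (p.map (f ≫ Y.a)) hcond
    have h1 : a ≫ (K : E ⥤ E).map f = m := by
      apply hmu
      constructor
      · rw [p.map_comp, ha_p, h0_snd]
      · rw [Category.assoc, K.ε.naturality f, ← Category.assoc, ha_c,
          Category.id_comp, Functor.id_map]
    have h2 : f ≫ Y.a = m := by
      apply hmu
      exact ⟨rfl, by rw [Category.assoc, Y.counit, Category.comp_id]⟩
    rw [h1, h2]
  -- coassociativity
  have ha_coassoc : a ≫ K.δ.app Z = a ≫ (K : E ⥤ E).map a := by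
    have hsq' := hpb (K.ε.app Z) (hε Z)
    have hpm : p.map (a ≫ K.δ.app Z) = p.map (a ≫ (K : E ⥤ E).map a) := by
      apply hsq'.hom_ext
      · rw [← p.map_comp, ← p.map_comp, Category.assoc, Category.assoc,
          K.left_counit, Category.comp_id]
        have : (K : E ⥤ E).map a ≫ K.ε.app ((K : E ⥤ E).obj Z) = K.ε.app Z ≫ a := by
          simpa using K.ε.naturality a
        rw [this, ← Category.assoc, ha_c, Category.id_comp]
      · rw [← p.map_comp, ← p.map_comp, Category.assoc, Category.assoc,
          K.right_counit, Category.comp_id, ← Functor.map_comp, ha_c,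
          CategoryTheory.Functor.map_id, Category.comp_id]
    have hcond : p.map (a ≫ K.δ.app Z) ≫ p.map (K.ε.app ((K : E ⥤ E).obj Z)) = p.map a := by
      rw [← p.map_comp, Category.assoc, K.left_counit, Category.comp_id]
    obtain ⟨m, hm, hmu⟩ := hε ((K : E ⥤ E).obj Z) a (p.map (a ≫ K.δ.app Z)) hcond
    have h1 : a ≫ K.δ.app Z = m := by
      apply hmu
      exact ⟨rfl, by rw [Category.assoc, K.left_counit, Category.comp_id]⟩
    have h2 : a ≫ (K : E ⥤ E).map a = m := by
      apply hmu
      constructor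
      · rw [← hpm]
      · have : (K : E ⥤ E).map a ≫ K.ε.app ((K : E ⥤ E).obj Z) = K.ε.app Z ≫ a := by
          simpa using K.ε.naturality a
        rw [Category.assoc, this, ← Category.assoc, ha_c, Category.id_comp]
    rw [h1, h2]
  -- the lifted coalgebra and coalgebra morphism
  refine ⟨⟨Z, a, ha_c, ha_coassoc⟩, ⟨f, hf_hom⟩, e, ?_, hfe⟩
  -- cartesianness in the coalgebra category
  intro W g h hcomm
  obtain ⟨l, ⟨hl_p, hl_c⟩, hl_u⟩ := hf g.f h hcomm
  -- l is a coalgebra morphism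
  have hl_hom : W.a ≫ (K : E ⥤ E).map l = l ≫ a := by
    have hpm : p.map (W.a ≫ (K : E ⥤ E).map l) = p.map (l ≫ a) := by
      apply hsq.hom_ext
      · rw [← p.map_comp, ← p.map_comp, Category.assoc, Category.assoc]
        have : (K : E ⥤ E).map l ≫ K.ε.app Z = K.ε.app W.A ≫ l := by
          simpa using K.ε.naturality l
        rw [this, ← Category.assoc, W.counit, Category.id_comp, ha_c,
          Category.comp_id, hl_p]
      · rw [← p.map_comp, ← p.map_comp, Category.assoc, Category.assoc,
          ← Functor.map_comp, hl_c, g.h, hf_hom, ← Category.assoc, hl_c]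
    have hcond : p.map (l ≫ a) ≫ p.map (K.ε.app Z) = p.map l := by
      rw [← p.map_comp, Category.assoc, ha_c, Category.comp_id]
    obtain ⟨m, hm, hmu⟩ := hε Z l (p.map (l ≫ a)) hcond
    have h1 : l ≫ a = m := by
      apply hmu
      exact ⟨rfl, by rw [Category.assoc, ha_c, Category.comp_id]⟩
    have h2 : W.a ≫ (K : E ⥤ E).map l = m := by
      apply hmu
      constructor
      · rw [hpm]
      · have : (K : E ⥤ E).map l ≫ K.ε.app Z = K.ε.app W.A ≫ l := by
          simpa using K.ε.naturality l
        rw [Category.assoc, this, ← Category.assoc, W.counit, Category.id_comp]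
    rw [h1, h2]
  refine ⟨⟨l, hl_hom⟩, ⟨hl_p, ?_⟩, ?_⟩
  · apply Comonad.Coalgebra.Hom.ext
    exact hl_c
  · intro l' ⟨hl'_p, hl'_c⟩
    apply Comonad.Coalgebra.Hom.ext
    exact hl_u l'.f ⟨hl'_p, congrArg Comonad.Coalgebra.Hom.f hl'_c⟩
end

section
/- Let (p, χ) be a comprehension category with a cleavage for p. Define K : E → E on objects by choosing a cartesian lift of χ_E : X_E → pE, with counit ε_E the chosen cartesian lift itself. Then K extends to a copointed endofunctor on E with ε : K ⇒ Id natural, every ε_E is p-cartesian, and for every p-cartesian f the image under p of the naturality square of ε at f is a pullback in B; consequently (K, ε) underlies a weakening and contraction comonad on p. -/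
open CategoryTheory

/-- A comprehension category (without terminal object): a fibration `p : E ⥤ B` together with a
functor `χ : E ⥤ B²` over `B` (i.e. `cod ∘ χ = p`) mapping `p`-cartesian arrows to pullback
squares in `B`. -/
structure CompCat (B E : Type*) [Category B] [Category E] where
  p : E ⥤ B
  fib : IsFibration p
  χ : E ⥤ Arrow B
  over_obj : ∀ X : E, (χ.obj X).right = p.obj X
  over_map : ∀ {X Y : E} (f : X ⟶ Y),
    (χ.map f).right = eqToHom (over_obj X) ≫ p.map f ≫ eqToHom (over_obj Y).symm
  χ_cart : ∀ {X Y : E} (f : X ⟶ Y), IsCartesian p f →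
    IsPullback (χ.map f).left (χ.obj X).hom (χ.obj Y).hom (χ.map f).right

namespace WCTest

variable {B E : Type*} [Category B] [Category E] (CC : CompCat B E)

lemma cart_ext {X Y : E} {f : X ⟶ Y} (hf : IsCartesian CC.p f) {Z : E} {l₁ l₂ : Z ⟶ X}
    (h1 : CC.p.map l₁ = CC.p.map l₂) (h2 : l₁ ≫ f = l₂ ≫ f) : l₁ = l₂ := by
  obtain ⟨l, hl, hu⟩ := hf (l₂ ≫ f) (CC.p.map l₂) (by rw [← CC.p.map_comp])
  rw [hu l₁ ⟨h1, h2⟩, hu l₂ ⟨rfl, rfl⟩]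

/-- chosen cartesian lift of χ_X -/
noncomputable def KL (X : E) : E :=
  (CC.fib X (CC.χ.obj X).left ((CC.χ.obj X).hom ≫ eqToHom (CC.over_obj X))).choose

noncomputable def εL (X : E) : KL CC X ⟶ X :=
  (CC.fib X (CC.χ.obj X).left ((CC.χ.obj X).hom ≫ eqToHom (CC.over_obj X))).choose_spec.choose

lemma eL (X : E) : CC.p.obj (KL CC X) = (CC.χ.obj X).left :=
  (CC.fib X (CC.χ.obj X).left ((CC.χ.obj X).hom ≫ eqToHom (CC.over_obj X))).choose_spec.choose_spec.choose

lemma ε_cart (X : E) : IsCartesian CC.p (εL CC X) :=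
  (CC.fib X (CC.χ.obj X).left ((CC.χ.obj X).hom ≫ eqToHom (CC.over_obj X))).choose_spec.choose_spec.choose_spec.1

lemma pε (X : E) :
    CC.p.map (εL CC X) = eqToHom (eL CC X) ≫ (CC.χ.obj X).hom ≫ eqToHom (CC.over_obj X) := by
  have := (CC.fib X (CC.χ.obj X).left ((CC.χ.obj X).hom ≫ eqToHom (CC.over_obj X))).choose_spec.choose_spec.choose_spec.2
  rw [εL]; exact this


lemma Kmap_aux {X Y : E} (f : X ⟶ Y) :
    (eqToHom (eL CC X) ≫ (CC.χ.map f).left ≫ eqToHom (eL CC Y).symm) ≫ CC.p.map (εL CC Y)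
      = CC.p.map (εL CC X ≫ f) := by
  rw [pε, CC.p.map_comp, pε]
  have w := Arrow.w (CC.χ.map f)
  rw [CC.over_map f] at w
  simp only [Category.assoc, eqToHom_trans_assoc, eqToHom_refl, Category.id_comp]
  rw [reassoc_of% w]
  simp

noncomputable def Kmap {X Y : E} (f : X ⟶ Y) : KL CC X ⟶ KL CC Y :=
  (ε_cart CC Y (εL CC X ≫ f) _ (Kmap_aux CC f)).exists.choose

lemma Kmap_spec {X Y : E} (f : X ⟶ Y) :
    CC.p.map (Kmap CC f) = eqToHom (eL CC X) ≫ (CC.χ.map f).left ≫ eqToHom (eL CC Y).symm ∧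
      Kmap CC f ≫ εL CC Y = εL CC X ≫ f :=
  (ε_cart CC Y (εL CC X ≫ f) _ (Kmap_aux CC f)).exists.choose_spec

noncomputable def K : E ⥤ E where
  obj := KL CC
  map := Kmap CC
  map_id X := by
    refine cart_ext CC (ε_cart CC X) ?_ ?_
    · rw [(Kmap_spec CC (𝟙 X)).1, CC.p.map_id]
      simp
    · rw [(Kmap_spec CC (𝟙 X)).2]
      simp
  map_comp {X Y Z} f g := by
    refine cart_ext CC (ε_cart CC Z) ?_ ?_
    · rw [(Kmap_spec CC (f ≫ g)).1, CC.p.map_comp, (Kmap_spec CC f).1, (Kmap_spec CC g).1,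
        CC.χ.map_comp]
      simp
    · rw [(Kmap_spec CC (f ≫ g)).2, Category.assoc, (Kmap_spec CC g).2, reassoc_of% (Kmap_spec CC f).2]

noncomputable def ε : K CC ⟶ 𝟭 E where
  app := εL CC
  naturality X Y f := (Kmap_spec CC f).2

lemma ε_pullback {X Y : E} (f : X ⟶ Y) (hf : IsCartesian CC.p f) :
    IsPullback (CC.p.map (εL CC X)) (CC.p.map (Kmap CC f)) (CC.p.map f)
      (CC.p.map (εL CC Y)) := by
  refine ((CC.χ_cart f hf).flip).of_iso (eqToIso (eL CC X).symm) (eqToIso (CC.over_obj X))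
    (eqToIso (eL CC Y).symm) (eqToIso (CC.over_obj Y)) ?_ ?_ ?_ ?_
  · rw [pε]; simp
  · rw [(Kmap_spec CC f).1]; simp
  · rw [CC.over_map f]; simp
  · rw [pε]; simp


lemma s_aux (X : E) :
    eqToHom (eL CC X) ≫ (CC.χ.obj X).hom
      = eqToHom (CC.over_obj (KL CC X)).symm ≫ (CC.χ.map (εL CC X)).right := by
  rw [CC.over_map, pε]
  simp

/-- diagonal-like section into the pullback X_{KX} -/
noncomputable def sd (X : E) : CC.p.obj (KL CC X) ⟶ (CC.χ.obj (KL CC X)).left :=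
  (CC.χ_cart (εL CC X) (ε_cart CC X)).lift (eqToHom (eL CC X))
    (eqToHom (CC.over_obj (KL CC X)).symm) (s_aux CC X)

lemma sd_fst (X : E) : sd CC X ≫ (CC.χ.map (εL CC X)).left = eqToHom (eL CC X) :=
  (CC.χ_cart (εL CC X) (ε_cart CC X)).lift_fst _ _ _

lemma sd_snd (X : E) :
    sd CC X ≫ (CC.χ.obj (KL CC X)).hom = eqToHom (CC.over_obj (KL CC X)).symm :=
  (CC.χ_cart (εL CC X) (ε_cart CC X)).lift_snd _ _ _

lemma δ_aux (X : E) :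
    (sd CC X ≫ eqToHom (eL CC (KL CC X)).symm) ≫ CC.p.map (εL CC (KL CC X))
      = CC.p.map (𝟙 (KL CC X)) := by
  rw [pε, CC.p.map_id]
  simp only [Category.assoc, eqToHom_trans_assoc, eqToHom_refl, Category.id_comp]
  rw [reassoc_of% sd_snd CC X]
  simp

noncomputable def δL (X : E) : KL CC X ⟶ KL CC (KL CC X) :=
  (ε_cart CC (KL CC X) (𝟙 (KL CC X)) _ (δ_aux CC X)).exists.choose

lemma δ_spec (X : E) :
    CC.p.map (δL CC X) = sd CC X ≫ eqToHom (eL CC (KL CC X)).symm ∧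
      δL CC X ≫ εL CC (KL CC X) = 𝟙 (KL CC X) :=
  (ε_cart CC (KL CC X) (𝟙 (KL CC X)) _ (δ_aux CC X)).exists.choose_spec

/-- key compatibility: image of Kmap composed with the diagonal -/
lemma sd_natural {X Y : E} (f : X ⟶ Y) :
    CC.p.map (Kmap CC f) ≫ sd CC Y = sd CC X ≫ (CC.χ.map (Kmap CC f)).left := by
  refine (CC.χ_cart (εL CC Y) (ε_cart CC Y)).hom_ext ?_ ?_
  · rw [Category.assoc, sd_fst, (Kmap_spec CC f).1]
    have : (CC.χ.map (Kmap CC f)).left ≫ (CC.χ.map (εL CC Y)).left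
        = (CC.χ.map (εL CC X)).left ≫ (CC.χ.map f).left := by
      rw [← Arrow.comp_left, ← Arrow.comp_left, ← CC.χ.map_comp, ← CC.χ.map_comp,
        (Kmap_spec CC f).2]
    simp only [Category.assoc]
    rw [this, reassoc_of% sd_fst CC X]
    simp
  · rw [Category.assoc, sd_snd]
    have w := Arrow.w (CC.χ.map (Kmap CC f))
    rw [Category.assoc, w, CC.over_map, reassoc_of% sd_snd CC X]
    try simp

lemma δ_natural {X Y : E} (f : X ⟶ Y) :
    Kmap CC f ≫ δL CC Y = δL CC X ≫ Kmap CC (Kmap CC f) := by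
  refine cart_ext CC (ε_cart CC (KL CC Y)) ?_ ?_
  · rw [CC.p.map_comp, CC.p.map_comp, (δ_spec CC Y).1, (δ_spec CC X).1,
      (Kmap_spec CC (Kmap CC f)).1]
    simp only [Category.assoc, eqToHom_trans_assoc, eqToHom_refl, Category.id_comp]
    rw [← Category.assoc, sd_natural CC f]
    simp
  · rw [Category.assoc, (δ_spec CC Y).2, Category.comp_id, Category.assoc,
      (Kmap_spec CC (Kmap CC f)).2, reassoc_of% (δ_spec CC X).2]
    try simp

lemma δ_counit₂ (X : E) : δL CC X ≫ Kmap CC (εL CC X) = 𝟙 (KL CC X) := by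
  refine cart_ext CC (ε_cart CC X) ?_ ?_
  · rw [CC.p.map_comp, (δ_spec CC X).1, (Kmap_spec CC (εL CC X)).1, CC.p.map_id]
    simp only [Category.assoc, eqToHom_trans_assoc, eqToHom_refl, Category.id_comp]
    rw [reassoc_of% sd_fst CC X]
    simp
  · rw [Category.assoc, (Kmap_spec CC (εL CC X)).2, reassoc_of% (δ_spec CC X).2]
    simp

lemma sd_δ (X : E) :
    sd CC X ≫ (CC.χ.map (δL CC X)).left
      = sd CC X ≫ eqToHom (eL CC (KL CC X)).symm ≫ sd CC (KL CC X) := by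
  refine (CC.χ_cart (εL CC (KL CC X)) (ε_cart CC (KL CC X))).hom_ext ?_ ?_
  · have : (CC.χ.map (δL CC X)).left ≫ (CC.χ.map (εL CC (KL CC X))).left
        = 𝟙 _ := by
      rw [← Arrow.comp_left, ← CC.χ.map_comp, (δ_spec CC X).2, CC.χ.map_id]
      rfl
    rw [Category.assoc, this, Category.comp_id, Category.assoc, Category.assoc,
      sd_fst]
    simp
  · have w := Arrow.w (CC.χ.map (δL CC X))
    rw [Category.assoc, w, CC.over_map, reassoc_of% sd_snd CC X, (δ_spec CC X).1]
    rw [Category.assoc, Category.assoc, Category.assoc, sd_snd]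
    simp

lemma δ_coassoc (X : E) :
    δL CC X ≫ Kmap CC (δL CC X) = δL CC X ≫ δL CC (KL CC X) := by
  refine cart_ext CC (ε_cart CC (KL CC (KL CC X))) ?_ ?_
  · rw [CC.p.map_comp, CC.p.map_comp, (δ_spec CC X).1, (Kmap_spec CC (δL CC X)).1,
      (δ_spec CC (KL CC X)).1]
    simp only [Category.assoc, eqToHom_trans_assoc, eqToHom_refl, Category.id_comp]
    rw [← Category.assoc, ← Category.assoc, sd_δ]
    simp
  · rw [Category.assoc, (Kmap_spec CC (δL CC X)).2, reassoc_of% (δ_spec CC X).2,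
      Category.assoc, (δ_spec CC (KL CC X)).2]
    simp

noncomputable def δ : K CC ⟶ K CC ⋙ K CC where
  app := δL CC
  naturality _ _ f := δ_natural CC f

end WCTest

/-- given a comprehension category `(p, χ)` with a cleavage for `p`, choosing for
each `E` a cartesian lift of the comprehension `χ_E` yields a copointed endofunctor `(K, ε)` on
`E` with each `ε_E` a `p`-cartesian lift of `χ_E`, whose counit-naturality squares at
`p`-cartesian arrows are sent by `p` to pullbacks; consequently `(K, ε)` underlies a weakening
and contraction comonad on `p` (there is a comultiplication `δ` satisfying the comonad laws). -/
theorem compcat_gives_wccmd {B E : Type*} [Category B] [Category E] (CC : CompCat B E) :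
    ∃ (K : E ⥤ E) (ε : K ⟶ 𝟭 E),
      (∀ X : E, IsCartesian CC.p (ε.app X)) ∧
      (∀ X : E, ∃ e : CC.p.obj (K.obj X) = (CC.χ.obj X).left,
          CC.p.map (ε.app X) ≫ eqToHom (CC.over_obj X).symm = eqToHom e ≫ (CC.χ.obj X).hom) ∧
      (∀ {X Y : E} (f : X ⟶ Y), IsCartesian CC.p f →
        IsPullback (CC.p.map (ε.app X)) (CC.p.map (K.map f)) (CC.p.map f)
          (CC.p.map (ε.app Y))) ∧
      ∃ δ : K ⟶ K ⋙ K,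
        (∀ X : E, δ.app X ≫ ε.app (K.obj X) = 𝟙 (K.obj X)) ∧
        (∀ X : E, δ.app X ≫ K.map (ε.app X) = 𝟙 (K.obj X)) ∧
        (∀ X : E, δ.app X ≫ K.map (δ.app X) = δ.app X ≫ δ.app (K.obj X)) := by
  refine ⟨WCTest.K CC, WCTest.ε CC, fun X => WCTest.ε_cart CC X,
    fun X => ⟨WCTest.eL CC X, ?_⟩,
    fun {X Y} f hf => WCTest.ε_pullback CC f hf, WCTest.δ CC,
    fun X => (WCTest.δ_spec CC X).2,
    WCTest.δ_counit₂ CC, WCTest.δ_coassoc CC⟩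
  show CC.p.map (WCTest.εL CC X) ≫ _ = _
  rw [WCTest.pε]
  simp
  rfl
end
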